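/- Let B ∈ ℝ^{N_z × (N·M)} give relative measurements between M subsystems with N outputs each. Suppose the subsystems {1,…,M} are partitioned into p groups G₁,…,G_p of equal cardinality M/p, let n = N·M, and let H ∈ {+1,−1}^{p×p} satisfy H Hᵀ = p·I_p with all entries of the first row equal to +1. Suppose moreover that for every pair of distinct groups (G_a, G_b), the number of rows of B involving both a subsystem of G_a and a subsystem of G_b is at most β·n, for some β ≥ 0. Define, for i = 1,…,p, the vector yᵢ ∈ ℝⁿ whose m-th entry equals H_{i,a}/√n whenever m ∈ q_k for some subsystem k ∈ G_a. Then y₁,…,y_p are orthonormal, B y₁ = 0, and ‖B yᵢ‖ ≤ p·√β for every i. -/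

import Mathlib

open Matrix

lemma rowsum {Nz M N : ℕ} (B : Matrix (Fin Nz) (Fin M × Fin N) ℝ) (l : Fin Nz)
    (j k : Fin M) (hjk : j ≠ k)
    (h0 : ∀ m : Fin M × Fin N, m.1 ≠ j → m.1 ≠ k → B l m = 0)
    (hj : (∑ i : Fin N, B l (j, i)) = 1)
    (hk : (∑ i : Fin N, B l (k, i)) = -1)
    (c : Fin M → ℝ) :
    ∑ m : Fin M × Fin N, B l m * c m.1 = c j - c k := by
  rw [Fintype.sum_prod_type]
  have hz : ∀ u ∈ Finset.univ, u ∉ ({j, k} : Finset (Fin M)) →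
      (∑ v : Fin N, B l (u, v) * c u) = 0 := by
    intro u _ hu
    simp only [Finset.mem_insert, Finset.mem_singleton, not_or] at hu
    have : ∀ v : Fin N, B l (u, v) = 0 := fun v => h0 (u, v) hu.1 hu.2
    simp [this]
  rw [← Finset.sum_subset (Finset.subset_univ ({j, k} : Finset (Fin M))) hz,
    Finset.sum_pair hjk, ← Finset.sum_mul, ← Finset.sum_mul, hj, hk]
  ring


/-- `B` gives (unit-gain) relative measurements between `M` subsystems with `N` outputs each. -/
def RelativeMeasurements {Nz M N : ℕ} (B : Matrix (Fin Nz) (Fin M × Fin N) ℝ) : Prop :=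
  ∀ l : Fin Nz, ∃ j k : Fin M, j ≠ k ∧
    (∀ m : Fin M × Fin N, m.1 ≠ j → m.1 ≠ k → B l m = 0) ∧
    (∀ i : Fin N, 0 ≤ B l (j, i)) ∧ (∑ i : Fin N, B l (j, i)) = 1 ∧
    (∀ i : Fin N, B l (k, i) ≤ 0) ∧ (∑ i : Fin N, B l (k, i)) = -1

/-- Subsystem `k` is involved in row `l` of `B` if some of its outputs has a nonzero entry. -/
def InvolvedIn {Nz M N : ℕ} (B : Matrix (Fin Nz) (Fin M × Fin N) ℝ) (k : Fin M) (l : Fin Nz) :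
    Prop :=
  ∃ i : Fin N, B l (k, i) ≠ 0

/-- Key construction in the proof of Proposition 1: from a partition of the subsystems into
`p` equal groups, few sensors crossing between groups, and a `±1` Walsh/Hadamard sign matrix
`H` with all-ones first row, the group-wise constant vectors `yᵢ` (value `H_{i,a}/√n` on
group `a`) are orthonormal, satisfy `B y₁ = 0`, and `‖B yᵢ‖ ≤ p √β`. -/
theorem stmt4 (Nz M N p : ℕ) (hM : 0 < M) (hN : 0 < N) (hp : 0 < p)
    (B : Matrix (Fin Nz) (Fin M × Fin N) ℝ)
    (hB : RelativeMeasurements B)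
    (g : Fin M → Fin p) (hdvd : p ∣ M)
    (hg : ∀ a : Fin p, (Finset.univ.filter fun k => g k = a).card = M / p)
    (H : Matrix (Fin p) (Fin p) ℝ)
    (hHsign : ∀ i j, H i j = 1 ∨ H i j = -1)
    (hHorth : H * Hᵀ = (p : ℝ) • 1)
    (hHrow : ∀ j, H ⟨0, hp⟩ j = 1)
    (β : ℝ) (hβ : 0 ≤ β)
    (hcross : ∀ a b : Fin p, a ≠ b →
      (Nat.card {l : Fin Nz |
          (∃ k : Fin M, g k = a ∧ InvolvedIn B k l) ∧
          (∃ k : Fin M, g k = b ∧ InvolvedIn B k l)} : ℝ) ≤ β * (N * M))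
    (y : Fin p → EuclideanSpace ℝ (Fin M × Fin N))
    (hy : ∀ i (m : Fin M × Fin N), y i m = H i (g m.1) / Real.sqrt (N * M)) :
    Orthonormal ℝ y ∧
    B *ᵥ (fun m => y ⟨0, hp⟩ m) = 0 ∧
    ∀ i : Fin p,
      Real.sqrt (∑ j : Fin Nz, (B *ᵥ (fun m => y i m)) j ^ 2) ≤ p * Real.sqrt β := by

  classical
  have hn : (0:ℝ) < (N:ℝ) * M := by positivity
  have hsq : Real.sqrt ((N:ℝ) * M) * Real.sqrt ((N:ℝ) * M) = (N:ℝ) * M :=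
    Real.mul_self_sqrt hn.le
  choose jf kf hjk h0 hjpos hjsum hkneg hksum using hB
  have hBy : ∀ (i : Fin p) (l : Fin Nz), (B *ᵥ fun m => y i m) l
      = (H i (g (jf l)) - H i (g (kf l))) / Real.sqrt ((N:ℝ) * M) := by
    intro i l
    have := rowsum B l (jf l) (kf l) (hjk l) (h0 l) (hjsum l) (hksum l)
      (fun u => H i (g u) / Real.sqrt ((N:ℝ) * M))
    simp only [Matrix.mulVec, dotProduct]
    push_cast at this ⊢
    rw [Finset.sum_congr rfl fun m _ => by rw [hy], this, div_sub_div_same]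
  have hinv : ∀ l u, (∑ i : Fin N, B l (u, i)) ≠ 0 → InvolvedIn B u l := by
    intro l u h
    by_contra hc
    simp only [InvolvedIn, not_exists, not_not] at hc
    exact h (by simp [hc])
  have hMp : ((M / p : ℕ) : ℝ) * p = M := by
    exact_mod_cast congrArg (Nat.cast : ℕ → ℝ) (Nat.div_mul_cancel hdvd)
  refine ⟨?_, ?_, ?_⟩
  · rw [orthonormal_iff_ite]
    intro i j
    have hHij : (∑ a : Fin p, H i a * H j a) = (p:ℝ) * (if i = j then 1 else 0) := by
      have h2 : (H * Hᵀ) i j = ((p:ℝ) • (1 : Matrix (Fin p) (Fin p) ℝ)) i j := by rw [hHorth]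
      simpa [Matrix.mul_apply, Matrix.transpose_apply, Matrix.one_apply] using h2
    have hinner : (inner ℝ (y i) (y j) : ℝ) = ∑ m : Fin M × Fin N, y i m * y j m := by
      simp [PiLp.inner_apply, RCLike.inner_apply, mul_comm]
    rw [hinner]
    have : ∑ m : Fin M × Fin N, y i m * y j m
        = ∑ u : Fin M, (N : ℝ) * (H i (g u) * H j (g u) / ((N:ℝ) * M)) := by
      rw [Fintype.sum_prod_type]
      refine Finset.sum_congr rfl fun u _ => ?_
      rw [Finset.sum_congr rfl fun v _ => (by rw [hy, hy, div_mul_div_comm, hsq] :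
        y i (u, v) * y j (u, v) = H i (g u) * H j (g u) / ((N:ℝ) * M))]
      simp [mul_comm]
    rw [this]
    have hfib : ∑ u : Fin M, (N : ℝ) * (H i (g u) * H j (g u) / ((N:ℝ) * M))
        = ∑ a : Fin p, ((M / p : ℕ) : ℝ) * ((N : ℝ) * (H i a * H j a / ((N:ℝ) * M))) := by
      rw [← Finset.sum_fiberwise Finset.univ g
        (fun u => (N : ℝ) * (H i (g u) * H j (g u) / ((N:ℝ) * M)))]
      refine Finset.sum_congr rfl fun a _ => ?_
      rw [Finset.sum_congr rfl (fun u hu => by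
        rw [(Finset.mem_filter.mp hu).2]), Finset.sum_const, hg a, nsmul_eq_mul]
    rw [hfib]
    have hterm : ∀ a : Fin p, ((M / p : ℕ) : ℝ) * ((N : ℝ) * (H i a * H j a / ((N:ℝ) * M)))
        = (((M / p : ℕ) : ℝ) * N / ((N:ℝ) * M)) * (H i a * H j a) := fun a => by ring
    rw [Finset.sum_congr rfl fun a _ => hterm a, ← Finset.mul_sum, hHij]
    by_cases h : i = j <;> simp [h]
    field_simp
    nlinarith [hMp, hn]
  · funext l
    rw [hBy ⟨0, hp⟩ l, hHrow, hHrow]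
    simp
  · intro i
    set s := Real.sqrt ((N:ℝ) * M) with hs
    -- sign partition
    set P : Finset (Fin p) := Finset.univ.filter (fun a => H i a = 1) with hP
    set Q : Finset (Fin p) := Finset.univ.filter (fun a => H i a = -1) with hQ
    have hPQ : P.card + Q.card = p := by
      rw [← Finset.card_union_of_disjoint]
      · have : P ∪ Q = Finset.univ := by
          ext a
          rcases hHsign i a with h | h <;> simp [hP, hQ, h]
        rw [this, Finset.card_univ, Fintype.card_fin]
      · rw [Finset.disjoint_filter]
        intro a _ h1 h2
        rw [h1] at h2; norm_num at h2
    set SF : Fin p → Fin p → Finset (Fin Nz) := fun a b => Finset.univ.filter (fun l =>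
      (∃ k : Fin M, g k = a ∧ InvolvedIn B k l) ∧
      (∃ k : Fin M, g k = b ∧ InvolvedIn B k l)) with hSF
    have hcard : ∀ a b : Fin p, a ≠ b → ((SF a b).card : ℝ) ≤ β * (N * M) := by
      intro a b hab
      have := hcross a b hab
      rwa [Nat.card_eq_fintype_card, Fintype.card_ofFinset] at this
    -- pointwise bound
    have hpt : ∀ l : Fin Nz, (B *ᵥ fun m => y i m) l ^ 2
        ≤ ∑ a ∈ P, ∑ b ∈ Q, (if l ∈ SF a b then 4 / ((N:ℝ) * M) else 0) := by
      intro l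
      have hrhsnn : (0:ℝ) ≤ ∑ a ∈ P, ∑ b ∈ Q, (if l ∈ SF a b then 4 / ((N:ℝ) * M) else 0) := by
        refine Finset.sum_nonneg fun a _ => Finset.sum_nonneg fun b _ => ?_
        beta_reduce; split <;> positivity
      by_cases heq : H i (g (jf l)) = H i (g (kf l))
      · rw [hBy, heq]; simpa using hrhsnn
      · -- the two groups have opposite signs
        have hinvj : InvolvedIn B (jf l) l := hinv l (jf l) (by rw [hjsum l]; norm_num)
        have hinvk : InvolvedIn B (kf l) l := hinv l (kf l) (by rw [hksum l]; norm_num)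
        have hval : (B *ᵥ fun m => y i m) l ^ 2 = 4 / ((N:ℝ) * M) := by
          rw [hBy, div_pow, show s^2 = (N:ℝ)*M from by rw [sq, hsq]]
          rcases hHsign i (g (jf l)) with h1 | h1 <;> rcases hHsign i (g (kf l)) with h2 | h2 <;>
            rw [h1, h2] at heq ⊢ <;> norm_num at heq <;> norm_num
        rw [hval]
        -- find the pair
        rcases hHsign i (g (jf l)) with h1 | h1 <;> rcases hHsign i (g (kf l)) with h2 | h2
        · exact absurd (h1.trans h2.symm) heq
        · -- a = g (jf l) ∈ P, b = g (kf l) ∈ Q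
          have haP : g (jf l) ∈ P := by simp [hP, h1]
          have hbQ : g (kf l) ∈ Q := by simp [hQ, h2]
          have hmem : l ∈ SF (g (jf l)) (g (kf l)) := by
            simp only [hSF, Finset.mem_filter, Finset.mem_univ, true_and]
            exact ⟨⟨jf l, rfl, hinvj⟩, ⟨kf l, rfl, hinvk⟩⟩
          calc (4:ℝ) / ((N:ℝ) * M)
              = (if l ∈ SF (g (jf l)) (g (kf l)) then 4 / ((N:ℝ) * M) else 0) := by
                rw [if_pos hmem]
            _ ≤ ∑ b ∈ Q, (if l ∈ SF (g (jf l)) b then 4 / ((N:ℝ) * M) else 0) := by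
                refine Finset.single_le_sum
                  (f := fun b => if l ∈ SF (g (jf l)) b then 4 / ((N:ℝ) * M) else 0)
                  (fun b _ => ?_) hbQ
                beta_reduce; split <;> positivity
            _ ≤ ∑ a ∈ P, ∑ b ∈ Q, (if l ∈ SF a b then 4 / ((N:ℝ) * M) else 0) := by
                refine Finset.single_le_sum
                  (f := fun a => ∑ b ∈ Q, if l ∈ SF a b then 4 / ((N:ℝ) * M) else 0)
                  (fun a _ => ?_) haP
                refine Finset.sum_nonneg fun b _ => ?_
                beta_reduce; split <;> positivity
        · have haP : g (kf l) ∈ P := by simp [hP, h2]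
          have hbQ : g (jf l) ∈ Q := by simp [hQ, h1]
          have hmem : l ∈ SF (g (kf l)) (g (jf l)) := by
            simp only [hSF, Finset.mem_filter, Finset.mem_univ, true_and]
            exact ⟨⟨kf l, rfl, hinvk⟩, ⟨jf l, rfl, hinvj⟩⟩
          calc (4:ℝ) / ((N:ℝ) * M)
              = (if l ∈ SF (g (kf l)) (g (jf l)) then 4 / ((N:ℝ) * M) else 0) := by
                rw [if_pos hmem]
            _ ≤ ∑ b ∈ Q, (if l ∈ SF (g (kf l)) b then 4 / ((N:ℝ) * M) else 0) := by
                refine Finset.single_le_sum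
                  (f := fun b => if l ∈ SF (g (kf l)) b then 4 / ((N:ℝ) * M) else 0)
                  (fun b _ => ?_) hbQ
                beta_reduce; split <;> positivity
            _ ≤ ∑ a ∈ P, ∑ b ∈ Q, (if l ∈ SF a b then 4 / ((N:ℝ) * M) else 0) := by
                refine Finset.single_le_sum
                  (f := fun a => ∑ b ∈ Q, if l ∈ SF a b then 4 / ((N:ℝ) * M) else 0)
                  (fun a _ => ?_) haP
                refine Finset.sum_nonneg fun b _ => ?_
                beta_reduce; split <;> positivity
        · exact absurd (h1.trans h2.symm) heq
    -- sum the bound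
    have hsum : (∑ l : Fin Nz, (B *ᵥ fun m => y i m) l ^ 2) ≤ (p:ℝ)^2 * β := by
      calc (∑ l : Fin Nz, (B *ᵥ fun m => y i m) l ^ 2)
          ≤ ∑ l : Fin Nz, ∑ a ∈ P, ∑ b ∈ Q, (if l ∈ SF a b then 4 / ((N:ℝ) * M) else 0) :=
            Finset.sum_le_sum fun l _ => hpt l
        _ = ∑ a ∈ P, ∑ b ∈ Q, ∑ l : Fin Nz, (if l ∈ SF a b then 4 / ((N:ℝ) * M) else 0) := by
            rw [Finset.sum_comm]
            exact Finset.sum_congr rfl fun a _ => Finset.sum_comm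

        _ = ∑ a ∈ P, ∑ b ∈ Q, ((SF a b).card : ℝ) * (4 / ((N:ℝ) * M)) := by
            refine Finset.sum_congr rfl fun a _ => Finset.sum_congr rfl fun b _ => ?_
            rw [Finset.sum_ite_mem, Finset.univ_inter, Finset.sum_const, nsmul_eq_mul]
        _ ≤ ∑ a ∈ P, ∑ b ∈ Q, (β * ((N:ℝ) * M)) * (4 / ((N:ℝ) * M)) := by
            refine Finset.sum_le_sum fun a ha => Finset.sum_le_sum fun b hb => ?_
            have hab : a ≠ b := by
              intro h
              rw [hP, Finset.mem_filter] at ha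
              rw [hQ, Finset.mem_filter] at hb
              rw [h, hb.2] at ha
              norm_num at ha
            exact mul_le_mul_of_nonneg_right (hcard a b hab) (by positivity)
        _ = (P.card : ℝ) * Q.card * ((β * ((N:ℝ) * M)) * (4 / ((N:ℝ) * M))) := by
            rw [Finset.sum_const, Finset.sum_const, nsmul_eq_mul, nsmul_eq_mul]; ring
        _ = 4 * β * ((P.card : ℝ) * Q.card) := by
            field_simp
        _ ≤ (p:ℝ)^2 * β := by
            have h1 : (P.card : ℝ) + Q.card = p := by exact_mod_cast hPQ
            have h2 : 0 ≤ β * ((P.card : ℝ) - Q.card)^2 := mul_nonneg hβ (sq_nonneg _)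
            have h3 : (p:ℝ)^2 = ((P.card : ℝ) + Q.card)^2 := by rw [h1]
            nlinarith [h2, h3]
    calc Real.sqrt (∑ j : Fin Nz, (B *ᵥ fun m => y i m) j ^ 2)
        ≤ Real.sqrt ((p:ℝ)^2 * β) := Real.sqrt_le_sqrt hsum
      _ = p * Real.sqrt β := by
          rw [Real.sqrt_mul (by positivity), Real.sqrt_sq (by positivity)]
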